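/- Let H be an n×n complex Hadamard matrix with rows H_1,…,H_n viewed as invertible elements of ℂ^n (entrywise operations). Then the rank-one orthogonal projections P_{ij} = Proj(H_i/H_j) onto the vectors with entries H_{ik}·conj(H_{jk}) form a magic unitary: for each fixed i, the projections P_{i1},…,P_{in} sum to the identity, and likewise for each fixed j, the projections P_{1j},…,P_{nj} sum to the identity. -/

import Mathlib

open Complex BigOperators Matrix

/-- For a complex Hadamard matrix `H` with rows `H_1,…,H_n`, the rank-one projections
`P_{ij} = Proj(H_i/H_j)`, written as `n × n` matrices
`(P_{ij})_{kl} = (1/n) · (H_{ik} conj(H_{jk})) · conj(H_{il} conj(H_{jl}))`,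
form a magic unitary: each entry is an orthogonal projection, and each row and each
column sums to the identity. -/
theorem hadamard_magic_unitary {n : ℕ} (hn : 0 < n) (H : Matrix (Fin n) (Fin n) ℂ)
    (hmod : ∀ i j, ‖H i j‖ = 1)
    (hrows : ∀ i j, i ≠ j → ∑ k, H i k * (starRingEnd ℂ) (H j k) = 0)
    (P : Fin n → Fin n → Matrix (Fin n) (Fin n) ℂ)
    (hP : ∀ i j, P i j = Matrix.of fun k l =>
      (H i k * (starRingEnd ℂ) (H j k)) *
        (starRingEnd ℂ) (H i l * (starRingEnd ℂ) (H j l)) / n) :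
    (∀ i j, (P i j)ᴴ = P i j ∧ P i j * P i j = P i j) ∧
    (∀ i, ∑ j, P i j = 1) ∧ (∀ j, ∑ i, P i j = 1) := by
  have hn' : (n : ℂ) ≠ 0 := Nat.cast_ne_zero.mpr hn.ne'
  have h1 : ∀ i j, H i j * (starRingEnd ℂ) (H i j) = 1 := by
    intro i j
    rw [Complex.mul_conj, Complex.normSq_eq_norm_sq, hmod]
    norm_num
  have hHHc : H * Hᴴ = (n : ℂ) • 1 := by
    ext i j
    simp only [Matrix.mul_apply, Matrix.conjTranspose_apply, Matrix.smul_apply,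
      Matrix.one_apply, Complex.star_def]
    by_cases hij : i = j
    · subst hij
      simp [h1]
    · rw [hrows i j hij]
      simp [hij]
  have hcHH : Hᴴ * H = (n : ℂ) • 1 := by
    have h2 : H * ((n : ℂ)⁻¹ • Hᴴ) = 1 := by
      rw [Matrix.mul_smul, hHHc, smul_smul, inv_mul_cancel₀ hn', one_smul]
    have h3 : ((n : ℂ)⁻¹ • Hᴴ) * H = 1 := mul_eq_one_comm.mp h2
    calc Hᴴ * H = (n : ℂ) • (((n : ℂ)⁻¹ • Hᴴ) * H) := by
          rw [Matrix.smul_mul, smul_smul, mul_inv_cancel₀ hn', one_smul]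
      _ = (n : ℂ) • 1 := by rw [h3]
  have hcols : ∀ k l, k ≠ l → ∑ i, (starRingEnd ℂ) (H i k) * H i l = 0 := by
    intro k l hkl
    have := congrFun (congrFun hcHH k) l
    simp only [Matrix.mul_apply, Matrix.conjTranspose_apply, Matrix.smul_apply,
      Matrix.one_apply, hkl, if_false, smul_zero, Complex.star_def] at this
    exact this
  -- squared modulus of the entries of the vectors ξ_{ij}
  have hxi : ∀ i j m, (starRingEnd ℂ) (H i m * (starRingEnd ℂ) (H j m)) *
      (H i m * (starRingEnd ℂ) (H j m)) = 1 := by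
    intro i j m
    simp only [_root_.map_mul, Complex.conj_conj]
    calc (starRingEnd ℂ) (H i m) * H j m * (H i m * (starRingEnd ℂ) (H j m))
        = (H i m * (starRingEnd ℂ) (H i m)) * (H j m * (starRingEnd ℂ) (H j m)) := by ring
      _ = 1 := by rw [h1, h1, one_mul]
  refine ⟨?_, ?_, ?_⟩
  · intro i j
    constructor
    · ext k l
      simp only [hP, Matrix.conjTranspose_apply, Matrix.of_apply, Complex.star_def,
        map_div₀, _root_.map_mul, Complex.conj_conj, Complex.conj_natCast]
      ring
    · ext k l
      simp only [hP, Matrix.mul_apply, Matrix.of_apply]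
      have key : ∀ m : Fin n, (H i k * (starRingEnd ℂ) (H j k)) *
          (starRingEnd ℂ) (H i m * (starRingEnd ℂ) (H j m)) / n *
          ((H i m * (starRingEnd ℂ) (H j m)) *
          (starRingEnd ℂ) (H i l * (starRingEnd ℂ) (H j l)) / n) =
          (H i k * (starRingEnd ℂ) (H j k)) *
          (starRingEnd ℂ) (H i l * (starRingEnd ℂ) (H j l)) / n / n := by
        intro m
        rw [div_mul_div_comm, div_div]
        congr 1
        calc (H i k * (starRingEnd ℂ) (H j k)) *
              (starRingEnd ℂ) (H i m * (starRingEnd ℂ) (H j m)) *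
              ((H i m * (starRingEnd ℂ) (H j m)) *
              (starRingEnd ℂ) (H i l * (starRingEnd ℂ) (H j l)))
            = (H i k * (starRingEnd ℂ) (H j k)) *
              (starRingEnd ℂ) (H i l * (starRingEnd ℂ) (H j l)) *
              ((starRingEnd ℂ) (H i m * (starRingEnd ℂ) (H j m)) *
              (H i m * (starRingEnd ℂ) (H j m))) := by ring
          _ = _ := by rw [hxi, mul_one]
      rw [Finset.sum_congr rfl fun m _ => key m]
      rw [Finset.sum_const, Finset.card_univ, Fintype.card_fin, nsmul_eq_mul]
      field_simp
  · intro i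
    ext k l
    simp only [hP, Matrix.sum_apply, Matrix.of_apply, Matrix.one_apply]
    by_cases hkl : k = l
    · subst hkl
      have key : ∀ j : Fin n, (H i k * (starRingEnd ℂ) (H j k)) *
          (starRingEnd ℂ) (H i k * (starRingEnd ℂ) (H j k)) / n = 1 / n := by
        intro j
        rw [mul_comm (H i k * (starRingEnd ℂ) (H j k)), hxi]
      rw [Finset.sum_congr rfl fun j _ => key j]
      simp [Finset.card_univ, hn']
    · simp only [hkl, if_false]
      have key : ∀ j : Fin n, (H i k * (starRingEnd ℂ) (H j k)) *
          (starRingEnd ℂ) (H i l * (starRingEnd ℂ) (H j l)) / n =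
          (H i k * (starRingEnd ℂ) (H i l)) *
          ((starRingEnd ℂ) (H j k) * H j l) / n := by
        intro j
        simp only [_root_.map_mul, Complex.conj_conj]
        ring
      rw [Finset.sum_congr rfl fun j _ => key j, ← Finset.sum_div,
        ← Finset.mul_sum, hcols k l hkl, mul_zero, zero_div]
  · intro j
    ext k l
    simp only [hP, Matrix.sum_apply, Matrix.of_apply, Matrix.one_apply]
    by_cases hkl : k = l
    · subst hkl
      have key : ∀ i : Fin n, (H i k * (starRingEnd ℂ) (H j k)) *
          (starRingEnd ℂ) (H i k * (starRingEnd ℂ) (H j k)) / n = 1 / n := by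
        intro i
        rw [mul_comm (H i k * (starRingEnd ℂ) (H j k)), hxi]
      rw [Finset.sum_congr rfl fun i _ => key i]
      simp [Finset.card_univ, hn']
    · simp only [hkl, if_false]
      have key : ∀ i : Fin n, (H i k * (starRingEnd ℂ) (H j k)) *
          (starRingEnd ℂ) (H i l * (starRingEnd ℂ) (H j l)) / n =
          ((starRingEnd ℂ) (H j k) * H j l) *
          ((starRingEnd ℂ) (H i l) * H i k) / n := by
        intro i
        simp only [_root_.map_mul, Complex.conj_conj]
        ring
      rw [Finset.sum_congr rfl fun i _ => key i, ← Finset.sum_div,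
        ← Finset.mul_sum, hcols l k (Ne.symm hkl), mul_zero, zero_div]
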